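/- For β ≥ 0 and T > 0 there exists C > 0 such that for all I ≥ 0, ∫_{max(J-I,0)}^∞ 𝟙_{I* ≥ 1} e^{(J - I - 2I*)/(2T)} I*^{β} dI* ≤ C e^{-|J-I|/(4T)} for all J ≥ 0. -/

import Mathlib

open MeasureTheory Set Real

theorem stmt_15 (β T : ℝ) (hβ : 0 ≤ β) (hT : 0 < T) :
    ∃ C : ℝ, 0 < C ∧ ∀ I : ℝ, 0 ≤ I → ∀ J : ℝ, 0 ≤ J →
      ∫ x in Set.Ioi (max (J - I) 0),
          (if (1:ℝ) ≤ x then Real.exp ((J - I - 2 * x) / (2 * T)) * x ^ β else 0)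
        ≤ C * Real.exp (-|J - I| / (4 * T)) := by
  set g : ℝ → ℝ := fun x => if (1:ℝ) ≤ x then Real.exp (-x / (4 * T)) * x ^ β else 0 with hg_def
  have hg_nonneg : ∀ x, 0 ≤ g x := by
    intro x
    simp only [hg_def]
    split
    · positivity
    · exact le_rfl
  have hg_meas : Measurable g := by
    apply Measurable.ite (measurableSet_le measurable_const measurable_id)
    · exact (Real.measurable_exp.comp ((measurable_id.neg).div_const _)).mul
        (measurable_id.pow_const β)
    · exact measurable_const
  have hmaj : IntegrableOn (fun x : ℝ => x ^ β * Real.exp (-(4*T)⁻¹ * x ^ (1:ℝ))) (Ioi 0) := by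
    exact integrableOn_rpow_mul_exp_neg_mul_rpow (by linarith) zero_lt_one (by positivity)
  have hg_int : IntegrableOn g (Ioi 0) := by
    refine Integrable.mono' hmaj (hg_meas.aestronglyMeasurable) ?_
    filter_upwards [ae_restrict_mem measurableSet_Ioi] with x hx
    simp only [mem_Ioi] at hx
    have hx' : (0:ℝ) ≤ x := hx.le
    rw [Real.norm_eq_abs, abs_of_nonneg (hg_nonneg x)]
    simp only [hg_def]
    split
    · rw [Real.rpow_one]
      rw [mul_comm]
      gcongr
      rw [neg_div, neg_mul]
      rw [inv_mul_eq_div, mul_comm]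
    · positivity
  set G : ℝ := ∫ x in Ioi (0:ℝ), g x with hG_def
  have hG_nonneg : 0 ≤ G := integral_nonneg fun x => hg_nonneg x
  refine ⟨G + 1, by linarith, ?_⟩
  intro I hI J hJ
  set a : ℝ := J - I with ha
  set m : ℝ := max a 0 with hm
  have hm0 : 0 ≤ m := le_max_right _ _
  have hexp_pos : 0 < Real.exp (-|a| / (4 * T)) := Real.exp_pos _
  have key : ∀ x ∈ Ioi m,
      (if (1:ℝ) ≤ x then Real.exp ((a - 2 * x) / (2 * T)) * x ^ β else 0)
        ≤ Real.exp (-|a| / (4 * T)) * g x := by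
    intro x hx
    simp only [mem_Ioi] at hx
    simp only [hg_def]
    split
    case isTrue h1 =>
      rw [← mul_assoc, ← Real.exp_add]
      have hx0 : (0:ℝ) ≤ x := by linarith
      gcongr
      · -- (a - 2x)/(2T) ≤ -|a|/(4T) + -x/(4T)
        rw [← add_div, div_le_div_iff₀ (by linarith) (by positivity)]
        have hxa : a ≤ x := lt_of_le_of_lt (le_max_left a 0) hx |>.le
        rcases abs_cases a with ⟨he, h0⟩ | ⟨he, h0⟩ <;> rw [he] <;> nlinarith
    case isFalse => simp
  calc ∫ x in Ioi m, (if (1:ℝ) ≤ x then Real.exp ((a - 2 * x) / (2 * T)) * x ^ β else 0)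
      ≤ ∫ x in Ioi m, Real.exp (-|a| / (4 * T)) * g x := by
        refine integral_mono_of_nonneg ?_ ?_ ?_
        · filter_upwards with x
          split
          · positivity
          · exact le_rfl
        · exact ((hg_int.mono_set (Ioi_subset_Ioi hm0)).const_mul _)
        · filter_upwards [ae_restrict_mem measurableSet_Ioi] with x hx using key x hx
    _ = Real.exp (-|a| / (4 * T)) * ∫ x in Ioi m, g x := integral_const_mul _ _
    _ ≤ Real.exp (-|a| / (4 * T)) * G := by
        gcongr
        exact setIntegral_mono_set hg_int (Filter.Eventually.of_forall fun x => hg_nonneg x)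
          (HasSubset.Subset.eventuallyLE (Ioi_subset_Ioi hm0))
    _ ≤ (G + 1) * Real.exp (-|a| / (4 * T)) := by
        rw [mul_comm]
        gcongr
        linarith
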